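/- Let u ∈ H¹(ℝ³; ℂ), u ≠ 0, and let t*(u) > 0 be the unique positive number with Q(u^{t*}) = 0. Then t*(u) < 1 if and only if Q(u) < 0, t*(u) = 1 if and only if Q(u) = 0, and E(u^t) < E(u^{t*}) for every t > 0 with t ≠ t*(u). -/

import Mathlib

open MeasureTheory Filter Topology

noncomputable section

abbrev E3 : Type := EuclideanSpace ℝ (Fin 3)

/-- The Fourier transform of the dipolar kernel. -/
def Khat (ξ : E3) : ℝ :=
  (4 * Real.pi / 3) * (2 * ξ 2 ^ 2 - ξ 0 ^ 2 - ξ 1 ^ 2) / ‖ξ‖ ^ 2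

/-- Fourier transform with normalization `F(f)(ξ) = ∫ f(x) e^{-i x·ξ} dx`. -/
def Ftr (f : E3 → ℂ) (ξ : E3) : ℂ :=
  ∫ x : E3, Complex.exp (-Complex.I * ((inner ℝ x ξ : ℝ) : ℂ)) * f x

/-- Inverse Fourier transform. -/
def Finv (f : E3 → ℂ) (x : E3) : ℂ :=
  (((2 * Real.pi)⁻¹ ^ 3 : ℝ) : ℂ) * ∫ ξ : E3, Complex.exp (Complex.I * ((inner ℝ x ξ : ℝ) : ℂ)) * f ξ

/-- The nonlocal term `K ∗ |u|²`, defined as inverse Fourier transform of `K̂ ⬝ F(|u|²)`. -/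
def Kconv (u : E3 → ℂ) : E3 → ℂ :=
  Finv fun ξ => (Khat ξ : ℂ) * Ftr (fun y => ((‖u y‖ : ℝ) : ℂ) ^ 2) ξ

def Afun (u : E3 → ℂ) : ℝ := ∫ x : E3, ‖fderiv ℝ u x‖ ^ 2

def Bfun (l1 l2 : ℝ) (u : E3 → ℂ) : ℝ :=
  (2 * Real.pi)⁻¹ ^ 3 * ∫ ξ : E3, (l1 + l2 * Khat ξ) * ‖Ftr (fun y => ((‖u y‖ : ℝ) : ℂ) ^ 2) ξ‖ ^ 2

def Cfun (l3 : ℝ) (u : E3 → ℂ) : ℝ := l3 * ∫ x : E3, ‖u x‖ ^ 5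

def Efun (l1 l2 l3 : ℝ) (u : E3 → ℂ) : ℝ :=
  (1 / 2) * Afun u + (1 / 2) * Bfun l1 l2 u + (2 / 5) * Cfun l3 u

def Qfun (l1 l2 l3 : ℝ) (u : E3 → ℂ) : ℝ :=
  Afun u + (3 / 2) * Bfun l1 l2 u + (9 / 5) * Cfun l3 u

/-- Membership in the Sobolev space `H¹(ℝ³; ℂ)`. -/
def H1 (u : E3 → ℂ) : Prop :=
  MemLp u 2 volume ∧ MemLp (fderiv ℝ u) 2 volume

def normH1 (u : E3 → ℂ) : ℝ :=
  Real.sqrt ((∫ x : E3, ‖u x‖ ^ 2) + ∫ x : E3, ‖fderiv ℝ u x‖ ^ 2)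

def Sset (c : ℝ) : Set (E3 → ℂ) := {u | H1 u ∧ (∫ x : E3, ‖u x‖ ^ 2) = c}

def Vset (l1 l2 l3 c : ℝ) : Set (E3 → ℂ) := {u ∈ Sset c | Qfun l1 l2 l3 u = 0}

/-- The rescaling `u^t(x) = t^{3/2} u(tx)`. -/
def scale (u : E3 → ℂ) (t : ℝ) : E3 → ℂ :=
  fun x => ((t ^ ((3 : ℝ) / 2) : ℝ) : ℂ) * u (t • x)

/-- `Re ∫ ∇u ⬝ ∇v̄ dx`. -/
def gradPairing (u v : E3 → ℂ) : ℝ :=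
  ∫ x : E3, ∑ j : Fin 3,
    (fderiv ℝ u x (EuclideanSpace.single j 1) *
      (starRingEnd ℂ) (fderiv ℝ v x (EuclideanSpace.single j 1))).re

/-- `(u, β)` is a weak solution of `-(1/2)Δu + λ₁|u|²u + λ₂(K∗|u|²)u + λ₃|u|³u + βu = 0`. -/
def WeakSolution (l1 l2 l3 : ℝ) (u : E3 → ℂ) (β : ℝ) : Prop :=
  H1 u ∧ ∀ v : E3 → ℂ, H1 v →
    (1 / 2) * gradPairing u v
      + l1 * (∫ x : E3, (((‖u x‖ : ℝ) : ℂ) ^ 2 * u x * (starRingEnd ℂ) (v x)).re)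
      + l2 * (∫ x : E3, (Kconv u x * u x * (starRingEnd ℂ) (v x)).re)
      + l3 * (∫ x : E3, (((‖u x‖ : ℝ) : ℂ) ^ 3 * u x * (starRingEnd ℂ) (v x)).re)
      + β * (∫ x : E3, (u x * (starRingEnd ℂ) (v x)).re) = 0

lemma fderiv_norm_scale (u : E3 → ℂ) (t : ℝ) (ht : t ≠ 0) (c : ℂ) (hc : c ≠ 0) (x : E3) :
    ‖fderiv ℝ (fun y => c * u (t • y)) x‖ = ‖c‖ * (|t| * ‖fderiv ℝ u (t • x)‖) := by
  by_cases hd : DifferentiableAt ℝ u (t • x)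
  · have hL : HasFDerivAt (fun y : E3 => t • y) (t • ContinuousLinearMap.id ℝ E3) x := by
      exact ((hasFDerivAt_id x).const_smul t)
    have h1 : HasFDerivAt (fun y => c * u (t • y))
        (c • ((fderiv ℝ u (t • x)).comp (t • ContinuousLinearMap.id ℝ E3))) x :=
      ((hd.hasFDerivAt.comp x hL)).const_mul c
    rw [h1.fderiv]
    have h2 : (fderiv ℝ u (t • x)).comp (t • ContinuousLinearMap.id ℝ E3)
        = t • fderiv ℝ u (t • x) := by
      ext v
      simp
    rw [h2, norm_smul c (t • fderiv ℝ u (t • x)), norm_smul t (fderiv ℝ u (t • x))]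
    simp [Real.norm_eq_abs, mul_assoc]
  · rw [fderiv_zero_of_not_differentiableAt hd]
    have hnd : ¬ DifferentiableAt ℝ (fun y => c * u (t • y)) x := by
      intro h
      apply hd
      have heq : u = fun z => c⁻¹ * ((fun y => c * u (t • y)) (t⁻¹ • z)) := by
        funext z
        simp [smul_smul, mul_inv_cancel₀ ht, inv_mul_cancel_left₀ hc]
      rw [heq]
      have hsm : DifferentiableAt ℝ (fun z : E3 => t⁻¹ • z) (t • x) :=
        (DifferentiableAt.const_smul differentiableAt_id t⁻¹)
      have h' : DifferentiableAt ℝ (fun y => c * u (t • y)) (t⁻¹ • t • x) := by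
        rw [smul_smul, inv_mul_cancel₀ ht, one_smul]; exact h
      have := h'.comp (t • x) hsm
      exact (this.const_mul c⁻¹)
    rw [fderiv_zero_of_not_differentiableAt hnd]
    simp

lemma finrank_E3 : Module.finrank ℝ E3 = 3 := by simp

lemma h32 {t : ℝ} (ht : 0 < t) : (t ^ ((3:ℝ)/2))^2 = t^3 := by
  rw [← Real.rpow_natCast (t ^ ((3:ℝ)/2)) 2, ← Real.rpow_mul ht.le,
    ← Real.rpow_natCast t 3]
  norm_num

lemma norm_scale {u : E3 → ℂ} {t : ℝ} (ht : 0 < t) (x : E3) :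
    ‖scale u t x‖ = t ^ ((3:ℝ)/2) * ‖u (t • x)‖ := by
  unfold scale
  rw [norm_mul, Complex.norm_real, Real.norm_eq_abs,
    abs_of_pos (Real.rpow_pos_of_pos ht _)]

lemma Ascale (u : E3 → ℂ) {t : ℝ} (ht : 0 < t) :
    Afun (scale u t) = t ^ 2 * Afun u := by
  have ht0 : t ≠ 0 := ne_of_gt ht
  have hc : ((t ^ ((3:ℝ)/2) : ℝ) : ℂ) ≠ 0 := by
    exact_mod_cast (Real.rpow_pos_of_pos ht ((3:ℝ)/2)).ne'
  have hpt : ∀ x : E3, ‖fderiv ℝ (scale u t) x‖ ^ 2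
      = t ^ 5 * ‖fderiv ℝ u (t • x)‖ ^ 2 := by
    intro x
    have : scale u t = fun y => ((t ^ ((3:ℝ)/2) : ℝ) : ℂ) * u (t • y) := rfl
    rw [this, fderiv_norm_scale u t ht0 _ hc x, Complex.norm_real, Real.norm_eq_abs,
      abs_of_pos (Real.rpow_pos_of_pos ht _), abs_of_pos ht]
    rw [mul_pow, mul_pow, h32 ht]
    ring
  unfold Afun
  simp_rw [hpt]
  rw [MeasureTheory.integral_const_mul]
  have := MeasureTheory.Measure.integral_comp_smul (μ := (volume : Measure E3))
    (fun x : E3 => ‖fderiv ℝ u x‖ ^ 2) t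
  simp only [finrank_E3] at this
  rw [this, abs_of_pos (by positivity : (0:ℝ) < (t^3)⁻¹), smul_eq_mul]
  field_simp

lemma Cscale (l3 : ℝ) (u : E3 → ℂ) {t : ℝ} (ht : 0 < t) :
    Cfun l3 (scale u t) = t ^ ((9:ℝ)/2) * Cfun l3 u := by
  have hpt : ∀ x : E3, ‖scale u t x‖ ^ 5 = t ^ ((15:ℝ)/2) * ‖u (t • x)‖ ^ 5 := by
    intro x
    rw [norm_scale ht, mul_pow, ← Real.rpow_natCast (t ^ ((3:ℝ)/2)) 5,
      ← Real.rpow_mul ht.le]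
    norm_num
  unfold Cfun
  simp_rw [hpt]
  rw [MeasureTheory.integral_const_mul]
  have := MeasureTheory.Measure.integral_comp_smul (μ := (volume : Measure E3))
    (fun x : E3 => ‖u x‖ ^ 5) t
  simp only [finrank_E3] at this
  rw [this, abs_of_pos (by positivity : (0:ℝ) < (t^3)⁻¹), smul_eq_mul]
  have hkey : t ^ ((15:ℝ)/2) * (t^(3:ℕ))⁻¹ = t ^ ((9:ℝ)/2) := by
    rw [← Real.rpow_natCast t 3, ← Real.rpow_neg ht.le, ← Real.rpow_add ht]
    norm_num
  rw [← hkey]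
  ring

lemma Khat_smul {s : ℝ} (hs : s ≠ 0) (ξ : E3) : Khat (s • ξ) = Khat ξ := by
  unfold Khat
  have happ : ∀ i : Fin 3, (s • ξ) i = s * ξ i := fun i => rfl
  rw [happ, happ, happ, norm_smul, Real.norm_eq_abs]
  rw [show (|s| * ‖ξ‖)^2 = s^2 * ‖ξ‖^2 by rw [mul_pow, sq_abs]]
  by_cases hξ : ξ = 0
  · subst hξ; simp
  · have hn : ‖ξ‖ ^ 2 ≠ 0 := pow_ne_zero 2 (norm_ne_zero_iff.mpr hξ)
    have hs2 : s ^ 2 ≠ 0 := pow_ne_zero 2 hs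
    field_simp

lemma Ftr_scale (u : E3 → ℂ) {t : ℝ} (ht : 0 < t) (ξ : E3) :
    Ftr (fun y => ((‖scale u t y‖ : ℝ) : ℂ) ^ 2) ξ
      = Ftr (fun y => ((‖u y‖ : ℝ) : ℂ) ^ 2) (t⁻¹ • ξ) := by
  have ht0 : t ≠ 0 := ne_of_gt ht
  have hint : ∀ x : E3,
      Complex.exp (-Complex.I * ((inner ℝ x ξ : ℝ) : ℂ)) * ((‖scale u t x‖ : ℝ) : ℂ) ^ 2
      = (fun z : E3 => ((t^3 : ℝ) : ℂ) *
          (Complex.exp (-Complex.I * ((inner ℝ z (t⁻¹ • ξ) : ℝ) : ℂ)) * ((‖u z‖ : ℝ) : ℂ) ^ 2))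
        (t • x) := by
    intro x
    simp only
    have h1 : (inner ℝ (t • x) (t⁻¹ • ξ) : ℝ) = inner ℝ x ξ := by
      rw [real_inner_smul_left, real_inner_smul_right, ← mul_assoc, mul_inv_cancel₀ ht0, one_mul]
    rw [h1]
    have h2 : ((‖scale u t x‖ : ℝ) : ℂ) ^ 2 = ((t^3 : ℝ) : ℂ) * ((‖u (t • x)‖ : ℝ) : ℂ) ^ 2 := by
      rw [norm_scale ht]
      push_cast
      rw [mul_pow]
      congr 1
      exact_mod_cast congrArg (fun r : ℝ => ((r : ℝ) : ℂ)) (h32 ht)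
    rw [h2]
    ring
  unfold Ftr
  simp_rw [hint]
  rw [MeasureTheory.Measure.integral_comp_smul (μ := (volume : Measure E3))
    (fun z : E3 => ((t^3 : ℝ) : ℂ) *
      (Complex.exp (-Complex.I * ((inner ℝ z (t⁻¹ • ξ) : ℝ) : ℂ)) * ((‖u z‖ : ℝ) : ℂ) ^ 2)) t]
  rw [MeasureTheory.integral_const_mul]
  simp only [finrank_E3]
  rw [abs_of_pos (by positivity : (0:ℝ) < (t^3)⁻¹)]
  rw [Complex.real_smul, ← mul_assoc]
  norm_cast
  rw [inv_mul_cancel₀ (by positivity : (t:ℝ)^3 ≠ 0)]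
  simp


lemma Bscale (l1 l2 : ℝ) (u : E3 → ℂ) {t : ℝ} (ht : 0 < t) :
    Bfun l1 l2 (scale u t) = t ^ 3 * Bfun l1 l2 u := by
  have ht0 : t ≠ 0 := ne_of_gt ht
  unfold Bfun
  have hint : ∀ ξ : E3,
      (l1 + l2 * Khat ξ) * ‖Ftr (fun y => ((‖scale u t y‖ : ℝ) : ℂ) ^ 2) ξ‖ ^ 2
      = (fun η : E3 => (l1 + l2 * Khat η) *
          ‖Ftr (fun y => ((‖u y‖ : ℝ) : ℂ) ^ 2) η‖ ^ 2) (t⁻¹ • ξ) := by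
    intro ξ
    simp only
    rw [Ftr_scale u ht ξ, Khat_smul (inv_ne_zero ht0) ξ]
  simp_rw [hint]
  rw [MeasureTheory.Measure.integral_comp_smul (μ := (volume : Measure E3))
    (fun η : E3 => (l1 + l2 * Khat η) * ‖Ftr (fun y => ((‖u y‖ : ℝ) : ℂ) ^ 2) η‖ ^ 2) t⁻¹]
  simp only [finrank_E3, smul_eq_mul]
  rw [show (t⁻¹ ^ 3)⁻¹ = t ^ 3 by rw [← inv_pow, inv_inv],
    abs_of_pos (by positivity : (0:ℝ) < t^3)]
  ring

set_option maxHeartbeats 1000000 in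
lemma keyalg {a b c x y : ℝ} (ha : 0 ≤ a) (hc : c ≤ 0) (hnd : 0 < a ∨ c < 0)
    (hx : 0 < x) (hy : 0 < y)
    (hfy : a*y^4 + (3/2)*b*y^6 + (9/5)*c*y^9 = 0) :
    (x < y → 0 < a*x^4 + (3/2)*b*x^6 + (9/5)*c*x^9) ∧
    (y < x → a*x^4 + (3/2)*b*x^6 + (9/5)*c*x^9 < 0) ∧
    (x ≠ y → (1/2)*a*x^4 + (1/2)*b*x^6 + (2/5)*c*x^9
        < (1/2)*a*y^4 + (1/2)*b*y^6 + (2/5)*c*y^9) := by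
  have hid1 : y^6 * (a*x^4 + (3/2)*b*x^6 + (9/5)*c*x^9)
      = a*(x^4*y^4)*(y^2-x^2) + (9/5)*((-c)*(y^3-x^3)*(x^6*y^6)) := by
    linear_combination x^6 * hfy
  have hid3 : 30*y^6*(((1/2)*a*y^4 + (1/2)*b*y^6 + (2/5)*c*y^9)
        - ((1/2)*a*x^4 + (1/2)*b*x^6 + (2/5)*c*x^9))
      = 5*a*(y^4*((x^2-y^2)^2*(2*x^2+y^2)))
        + 6*((-c)*(y^6*((x^3-y^3)^2*(2*x^3+y^3)))) := by
    linear_combination (10*(y^6-x^6)) * hfy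
  have hy6 : (0:ℝ) < y^6 := pow_pos hy 6
  have hx6y6 : (0:ℝ) < x^6*y^6 := mul_pos (pow_pos hx 6) hy6
  have hx4y4 : (0:ℝ) < x^4*y^4 := mul_pos (pow_pos hx 4) (pow_pos hy 4)
  refine ⟨?_, ?_, ?_⟩
  · intro hxy
    have hxy2 : x^2 < y^2 := pow_lt_pow_left₀ hxy hx.le (by norm_num)
    have hxy3 : x^3 < y^3 := pow_lt_pow_left₀ hxy hx.le (by norm_num)
    have hsum : 0 < a*(x^4*y^4)*(y^2-x^2) + (9/5)*((-c)*(y^3-x^3)*(x^6*y^6)) := by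
      have h1 : 0 ≤ a*(x^4*y^4)*(y^2-x^2) :=
        mul_nonneg (mul_nonneg ha hx4y4.le) (by linarith)
      have h2 : 0 ≤ (9/5)*((-c)*(y^3-x^3)*(x^6*y^6)) :=
        mul_nonneg (by norm_num) (mul_nonneg (mul_nonneg (by linarith) (by linarith))
          hx6y6.le)
      rcases hnd with hA | hC
      · have : 0 < a*(x^4*y^4)*(y^2-x^2) :=
          mul_pos (mul_pos hA hx4y4) (by linarith)
        linarith
      · have : 0 < (9/5)*((-c)*(y^3-x^3)*(x^6*y^6)) :=
          mul_pos (by norm_num) (mul_pos (mul_pos (by linarith) (by linarith)) hx6y6)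
        linarith
    by_contra hcon
    push_neg at hcon
    have := mul_nonpos_of_nonneg_of_nonpos hy6.le hcon
    linarith [hid1, hsum, this]
  · intro hxy
    have hxy2 : y^2 < x^2 := pow_lt_pow_left₀ hxy hy.le (by norm_num)
    have hxy3 : y^3 < x^3 := pow_lt_pow_left₀ hxy hy.le (by norm_num)
    have hsum : a*(x^4*y^4)*(y^2-x^2) + (9/5)*((-c)*(y^3-x^3)*(x^6*y^6)) < 0 := by
      have h1 : a*(x^4*y^4)*(y^2-x^2) ≤ 0 :=
        mul_nonpos_of_nonneg_of_nonpos (mul_nonneg ha hx4y4.le) (by linarith)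
      have h2 : (9/5)*((-c)*(y^3-x^3)*(x^6*y^6)) ≤ 0 := by
        have : (-c)*(y^3-x^3)*(x^6*y^6) ≤ 0 :=
          mul_nonpos_of_nonpos_of_nonneg
            (mul_nonpos_of_nonneg_of_nonpos (by linarith) (by linarith)) hx6y6.le
        linarith
      rcases hnd with hA | hC
      · have : a*(x^4*y^4)*(y^2-x^2) < 0 :=
          mul_neg_of_pos_of_neg (mul_pos hA hx4y4) (by linarith)
        linarith
      · have : (9/5)*((-c)*(y^3-x^3)*(x^6*y^6)) < 0 := by
          have : (-c)*(y^3-x^3)*(x^6*y^6) < 0 :=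
            mul_neg_of_neg_of_pos
              (mul_neg_of_pos_of_neg (by linarith) (by linarith)) hx6y6
          linarith
        linarith
    by_contra hcon
    push_neg at hcon
    have := mul_nonneg hy6.le hcon
    linarith [hid1, hsum, this]
  · intro hxy
    have hne2 : 0 < (x^2-y^2)^2 := by
      apply sq_pos_of_ne_zero
      intro h
      rcases lt_or_gt_of_ne hxy with hlt | hgt
      · have := pow_lt_pow_left₀ hlt hx.le (two_ne_zero) ; linarith
      · have := pow_lt_pow_left₀ hgt hy.le (two_ne_zero) ; linarith
    have hne3 : 0 < (x^3-y^3)^2 := by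
      apply sq_pos_of_ne_zero
      intro h
      rcases lt_or_gt_of_ne hxy with hlt | hgt
      · have := pow_lt_pow_left₀ hlt hx.le (three_ne_zero) ; linarith
      · have := pow_lt_pow_left₀ hgt hy.le (three_ne_zero) ; linarith
    have p2 : (0:ℝ) < 2*x^2+y^2 := by
      have := pow_pos hx 2; have := pow_pos hy 2; linarith
    have p3 : (0:ℝ) < 2*x^3+y^3 := by
      have := pow_pos hx 3; have := pow_pos hy 3; linarith
    have hsum : 0 < 5*a*(y^4*((x^2-y^2)^2*(2*x^2+y^2)))
        + 6*((-c)*(y^6*((x^3-y^3)^2*(2*x^3+y^3)))) := by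
      have q1 : 0 < y^4*((x^2-y^2)^2*(2*x^2+y^2)) :=
        mul_pos (pow_pos hy 4) (mul_pos hne2 p2)
      have q2 : 0 < y^6*((x^3-y^3)^2*(2*x^3+y^3)) :=
        mul_pos hy6 (mul_pos hne3 p3)
      have h1 : 0 ≤ 5*a*(y^4*((x^2-y^2)^2*(2*x^2+y^2))) :=
        mul_nonneg (by linarith) q1.le
      have h2 : 0 ≤ 6*((-c)*(y^6*((x^3-y^3)^2*(2*x^3+y^3)))) :=
        mul_nonneg (by norm_num) (mul_nonneg (by linarith) q2.le)
      rcases hnd with hA | hC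
      · have : 0 < 5*a*(y^4*((x^2-y^2)^2*(2*x^2+y^2))) :=
          mul_pos (by linarith) q1
        linarith
      · have : 0 < 6*((-c)*(y^6*((x^3-y^3)^2*(2*x^3+y^3)))) :=
          mul_pos (by norm_num) (mul_pos (by linarith) q2)
        linarith
    by_contra hcon
    push_neg at hcon
    have h30 : (0:ℝ) ≤ 30*y^6 := by linarith
    have hle := mul_nonpos_of_nonneg_of_nonpos h30 (sub_nonpos.2 hcon)
    linarith [hid3, hsum, hle]
lemma scale_one (u : E3 → ℂ) : scale u 1 = u := by
  funext x
  simp [scale]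

lemma sqrt_pows {s : ℝ} (hs : 0 < s) :
    (Real.sqrt s)^4 = s^2 ∧ (Real.sqrt s)^6 = s^3 ∧ (Real.sqrt s)^9 = s ^ ((9:ℝ)/2) := by
  have hsq : Real.sqrt s ^ 2 = s := Real.sq_sqrt hs.le
  refine ⟨?_, ?_, ?_⟩
  · calc (Real.sqrt s)^4 = ((Real.sqrt s)^2)^2 := by ring
      _ = s^2 := by rw [hsq]
  · calc (Real.sqrt s)^6 = ((Real.sqrt s)^2)^3 := by ring
      _ = s^3 := by rw [hsq]
  · rw [Real.sqrt_eq_rpow, ← Real.rpow_natCast (s ^ ((1:ℝ)/2)) 9, ← Real.rpow_mul hs.le]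
    norm_num

lemma Qscale (l1 l2 l3 : ℝ) (u : E3 → ℂ) {s : ℝ} (hs : 0 < s) :
    Qfun l1 l2 l3 (scale u s) = Afun u * (Real.sqrt s)^4
      + (3/2) * Bfun l1 l2 u * (Real.sqrt s)^6 + (9/5) * Cfun l3 u * (Real.sqrt s)^9 := by
  obtain ⟨h4, h6, h9⟩ := sqrt_pows hs
  unfold Qfun
  rw [Ascale u hs, Bscale l1 l2 u hs, Cscale l3 u hs, h4, h6, h9]
  ring

lemma Escale (l1 l2 l3 : ℝ) (u : E3 → ℂ) {s : ℝ} (hs : 0 < s) :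
    Efun l1 l2 l3 (scale u s) = (1/2) * Afun u * (Real.sqrt s)^4
      + (1/2) * Bfun l1 l2 u * (Real.sqrt s)^6 + (2/5) * Cfun l3 u * (Real.sqrt s)^9 := by
  obtain ⟨h4, h6, h9⟩ := sqrt_pows hs
  unfold Efun
  rw [Ascale u hs, Bscale l1 l2 u hs, Cscale l3 u hs, h4, h6, h9]
  ring


/-- with `t*(u)` the unique positive zero of `t ↦ Q(u^t)`, one has
`t* < 1 ↔ Q(u) < 0`, `t* = 1 ↔ Q(u) = 0`, and `E(u^t) < E(u^{t*})` for `t ≠ t*`. -/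
theorem stmt8 (l1 l2 l3 : ℝ) (hl3 : l3 < 0) (u : E3 → ℂ) (hu : H1 u)
    (hu0 : ¬ u =ᵐ[volume] (0 : E3 → ℂ)) (tstar : ℝ) (hts : 0 < tstar)
    (hQ : Qfun l1 l2 l3 (scale u tstar) = 0)
    (huniq : ∀ s : ℝ, 0 < s → Qfun l1 l2 l3 (scale u s) = 0 → s = tstar) :
    (tstar < 1 ↔ Qfun l1 l2 l3 u < 0) ∧
    (tstar = 1 ↔ Qfun l1 l2 l3 u = 0) ∧
    ∀ t : ℝ, 0 < t → t ≠ tstar →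
      Efun l1 l2 l3 (scale u t) < Efun l1 l2 l3 (scale u tstar) := by
  set a := Afun u with hadef
  set b := Bfun l1 l2 u with hbdef
  set c := Cfun l3 u with hcdef
  have ha0 : 0 ≤ a := integral_nonneg (fun x => sq_nonneg _)
  have hc0 : c ≤ 0 :=
    mul_nonpos_of_nonpos_of_nonneg hl3.le (integral_nonneg (fun x => by positivity))
  set y := Real.sqrt tstar with hydef
  have hy : 0 < y := Real.sqrt_pos.2 hts
  have hy2 : y ^ 2 = tstar := Real.sq_sqrt hts.le
  have hfy : a*y^4 + (3/2)*b*y^6 + (9/5)*c*y^9 = 0 := by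
    have := Qscale l1 l2 l3 u hts
    rw [hQ] at this
    linarith [this]
  have hnd : 0 < a ∨ c < 0 := by
    by_contra h
    push_neg at h
    have ha' : a = 0 := le_antisymm h.1 ha0
    have hc' : c = 0 := le_antisymm hc0 h.2
    have hb : b = 0 := by
      rw [ha', hc'] at hfy
      have h6 : (0:ℝ) < y^6 := pow_pos hy 6
      have : b * y^6 = 0 := by linarith
      rcases mul_eq_zero.1 this with hb | h0
      · exact hb
      · exact absurd h0 h6.ne'
    have hz : Qfun l1 l2 l3 (scale u (tstar+1)) = 0 := by
      rw [Qscale l1 l2 l3 u (by linarith : (0:ℝ) < tstar+1), ← hadef, ← hbdef, ← hcdef,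
        ha', hb, hc']
      ring
    have := huniq (tstar+1) (by linarith) hz
    linarith
  have hQu : Qfun l1 l2 l3 u = a*(1:ℝ)^4 + (3/2)*b*(1:ℝ)^6 + (9/5)*c*(1:ℝ)^9 := by
    unfold Qfun
    ring
  obtain ⟨k1, k2, _⟩ := keyalg ha0 hc0 hnd one_pos hy hfy
  refine ⟨⟨?_, ?_⟩, ⟨?_, ?_⟩, ?_⟩
  · intro h
    have hylt : y < 1 := by nlinarith
    have := k2 hylt
    rw [hQu]
    linarith
  · intro h
    rcases lt_trichotomy tstar 1 with h1 | h1 | h1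
    · exact h1
    · exfalso
      rw [h1, scale_one] at hQ
      rw [hQ] at h
      exact lt_irrefl 0 h
    · exfalso
      have hygt : 1 < y := by nlinarith [Real.sqrt_nonneg tstar]
      have := k1 hygt
      rw [hQu] at h
      linarith
  · intro h1
    rw [h1, scale_one] at hQ
    exact hQ
  · intro h
    refine (huniq 1 one_pos ?_).symm
    rw [scale_one]
    exact h
  · intro t ht htne
    set x := Real.sqrt t with hxdef
    have hx : 0 < x := Real.sqrt_pos.2 ht
    have hx2 : x ^ 2 = t := Real.sq_sqrt ht.le
    have hxny : x ≠ y := by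
      intro heq
      apply htne
      rw [← hx2, ← hy2, heq]
    obtain ⟨_, _, k3⟩ := keyalg ha0 hc0 hnd hx hy hfy
    have h3 := k3 hxny
    rw [Escale l1 l2 l3 u ht, Escale l1 l2 l3 u hts, ← hadef, ← hbdef, ← hcdef]
    linarith
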